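/- Let (x, y, z) be a primitive solution of 7x² + 59y² = 3z² with z > 0 and (x,y,z) ∉ {(1,2,9),(1,−2,9),(−1,2,9)}. Write the incidence I = (9y − 2z)/(9x − z) in lowest terms as p/q with q > 0, and let δ = gcd(A(p,q), B(p,q)) > 0. Then x = A(p,q)/δ, y = B(p,q)/δ, and z = C(p,q)/δ, and δ divides 2·3⁵·7·59. -/

import Mathlib

def A (p q : ℤ) : ℤ := 59*p^2 - 236*p*q - 7*q^2
def B (p q : ℤ) : ℤ := -118*p^2 - 14*p*q + 14*q^2
def C (p q : ℤ) : ℤ := 9 * (59*p^2 + 7*q^2)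

theorem stmt16 (x y z : ℤ) (hx : x ≠ 0) (hy : y ≠ 0) (hz : 0 < z)
    (hcop : Int.gcd x y = 1) (h : 7*x^2 + 59*y^2 = 3*z^2)
    (h1 : (x, y, z) ≠ (1, 2, 9)) (h2 : (x, y, z) ≠ (1, -2, 9))
    (h3 : (x, y, z) ≠ (-1, 2, 9))
    (p q : ℤ) (hq : 0 < q) (hpq : Int.gcd p q = 1)
    (hinc : (p : ℚ) / (q : ℚ) = ((9*y - 2*z : ℤ) : ℚ) / ((9*x - z : ℤ) : ℚ)) :
    A p q = (Int.gcd (A p q) (B p q) : ℤ) * x ∧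
    B p q = (Int.gcd (A p q) (B p q) : ℤ) * y ∧
    C p q = (Int.gcd (A p q) (B p q) : ℤ) * z ∧
    (Int.gcd (A p q) (B p q) : ℤ) ∣ 2 * 3^5 * 7 * 59 := by
  have hcop' : IsCoprime x y := Int.isCoprime_iff_gcd_eq_one.mpr hcop
  -- denominator nonzero
  have hD : 9*x - z ≠ 0 := by
    intro h0
    have hz9 : z = 9*x := by linarith
    have hy2 : (y - 2*x) * (y + 2*x) = 0 := by nlinarith
    have hx1 : x ∣ 1 := by
      have hxy : x ∣ y := by
        rcases mul_eq_zero.mp hy2 with h' | h'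
        · exact ⟨2, by linarith⟩
        · exact ⟨-2, by linarith⟩
      have : (x : ℤ) ∣ (Int.gcd x y : ℤ) := Int.dvd_coe_gcd dvd_rfl hxy
      rwa [hcop] at this
    rcases Int.isUnit_iff.mp (isUnit_of_dvd_one hx1) with hx' | hx'
    · rcases mul_eq_zero.mp hy2 with h' | h'
      · have hxx : x = 1 ∧ y = 2 ∧ z = 9 := by omega
        exact h1 (by rw [hxx.1, hxx.2.1, hxx.2.2])
      · have hxx : x = 1 ∧ y = -2 ∧ z = 9 := by omega
        exact h2 (by rw [hxx.1, hxx.2.1, hxx.2.2])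
    · rw [hx'] at hz9; omega
  -- cross-multiplied incidence relation
  have hE : q * (9*y - 2*z) = p * (9*x - z) := by
    have hq0 : (q : ℚ) ≠ 0 := Int.cast_ne_zero.mpr (by omega)
    have hD0 : ((9*x - z : ℤ) : ℚ) ≠ 0 := Int.cast_ne_zero.mpr hD
    have := (div_eq_div_iff hq0 hD0).mp hinc
    have : ((q * (9*y - 2*z) : ℤ) : ℚ) = ((p * (9*x - z) : ℤ) : ℚ) := by
      push_cast at this ⊢; linarith
    exact_mod_cast this
  -- key proportionality identities
  have key1 : A p q * y = B p q * x := by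
    have h0 : (9*x - z) * (A p q * y - B p q * x) = 0 := by
      unfold A B
      linear_combination (-118*p*x - 59*p*y - 7*q*x + 118*q*y + 27*q*z) * hE +
        (9*p*q - 18*q^2) * h
    rcases mul_eq_zero.mp h0 with h' | h'
    · exact absurd h' hD
    · linarith
  have key2 : A p q * z = C p q * x := by
    have h0 : (9*x - z) * (A p q * z - C p q * x) = 0 := by
      unfold A C
      linear_combination (531*p*x - 59*p*z + 531*q*y + 118*q*z) * hE + (-81*q^2) * h
    rcases mul_eq_zero.mp h0 with h' | h'
    · exact absurd h' hD
    · linarith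
  -- extract the common factor t
  have hxA : x ∣ A p q := by
    have : x ∣ A p q * y := ⟨B p q, by linarith⟩
    exact hcop'.dvd_of_dvd_mul_right this
  obtain ⟨t, ht⟩ := hxA
  have htB : B p q = t * y := by
    have : x * (t * y - B p q) = 0 := by
      have := key1; rw [ht] at this; ring_nf at this ⊢; linarith
    rcases mul_eq_zero.mp this with h' | h'
    · exact absurd h' hx
    · linarith
  have htC : C p q = t * z := by
    have : x * (t * z - C p q) = 0 := by
      have := key2; rw [ht] at this; ring_nf at this ⊢; linarith
    rcases mul_eq_zero.mp this with h' | h'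
    · exact absurd h' hx
    · linarith
  have htA : A p q = t * x := by rw [ht]; ring
  -- positivity of t
  have hCpos : 0 < C p q := by unfold C; positivity
  have htpos : 0 < t := by
    rw [htC] at hCpos
    by_contra h'
    push_neg at h'
    nlinarith
  -- gcd computation
  have hgcd : (Int.gcd (A p q) (B p q) : ℤ) = t := by
    rw [htA, htB, Int.gcd_mul_left, hcop, mul_one, Int.natCast_natAbs, abs_of_pos htpos]
  refine ⟨by rw [hgcd, htA], by rw [hgcd, htB], by rw [hgcd, htC], ?_⟩
  rw [hgcd]
  -- divisibility of t
  have htdA : t ∣ A p q := ⟨x, htA⟩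
  have htdB : t ∣ B p q := ⟨y, htB⟩
  have comb1 : t ∣ 200718 * p^3 := by
    have : (-98*p + 98*q) * A p q + (1652*p + 49*q) * B p q = -(200718 * p^3) := by
      unfold A B; ring
    have h' : t ∣ -(200718 * p^3) := by
      rw [← this]; exact dvd_add (htdA.mul_left _) (htdB.mul_left _)
    exact (dvd_neg).mp h'
  have comb2 : t ∣ 200718 * q^3 := by
    have : (-6962*p - 826*q) * A p q + (-3481*p + 13924*q) * B p q = 200718 * q^3 := by
      unfold A B; ring
    rw [← this]; exact dvd_add (htdA.mul_left _) (htdB.mul_left _)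
  have hpq' : IsCoprime p q := Int.isCoprime_iff_gcd_eq_one.mpr hpq
  obtain ⟨u, v, huv⟩ := (hpq'.pow (n := 3) (m := 3))
  have : t ∣ 200718 := by
    have : u * (200718 * p^3) + v * (200718 * q^3) = 200718 := by
      linear_combination 200718 * huv
    rw [← this]
    exact dvd_add (comb1.mul_left _) (comb2.mul_left _)
  have hN : (2 * 3^5 * 7 * 59 : ℤ) = 200718 := by norm_num
  rwa [hN]
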